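/- A square 0-1 matrix A is idempotent (A² = A) if and only if it is permutation similar to a block matrix [[0, X, XY],[0, I, Y],[0, 0, 0]], where the zero diagonal blocks are square and may have size 0, and X, Y are 0-1 matrices such that XY is a 0-1 matrix. -/

import Mathlib

set_option maxHeartbeats 1000000

open Matrix

/-- A 0-1 matrix over the integers. -/
def IsZeroOne {α β : Type*} (A : Matrix α β ℤ) : Prop :=
  ∀ i j, A i j = 0 ∨ A i j = 1

/-- The block matrix [[0, X, Z],[0, P, Y],[0, 0, 0]] with square zero diagonal blocks. -/
def blockH {α β γ : Type*} (X : Matrix α β ℤ) (P : Matrix β β ℤ)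
    (Y : Matrix β γ ℤ) (Z : Matrix α γ ℤ) : Matrix (α ⊕ β ⊕ γ) (α ⊕ β ⊕ γ) ℤ :=
  Matrix.fromBlocks 0 (Matrix.fromCols X Z) 0 (Matrix.fromBlocks P Y 0 0)

set_option linter.unusedSectionVars false

section aux
variable {n : ℕ} {A : Matrix (Fin n) (Fin n) ℤ}
  (h01 : IsZeroOne A) (h2 : A * A = A)
include h01 h2

lemma nonneg01 (i j) : 0 ≤ A i j := by rcases h01 i j with h | h <;> omega

lemma term_le (i j k : Fin n) : A i k * A k j ≤ A i j := by
  have h := Finset.single_le_sum (f := fun l => A i l * A l j)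
    (fun l _ => mul_nonneg (nonneg01 h01 h2 i l) (nonneg01 h01 h2 l j)) (Finset.mem_univ k)
  calc A i k * A k j ≤ ∑ l, A i l * A l j := h
    _ = (A * A) i j := (Matrix.mul_apply).symm
    _ = A i j := by rw [h2]

lemma two_terms (i j k l : Fin n) (hkl : k ≠ l) :
    A i k * A k j + A i l * A l j ≤ A i j := by
  have h := Finset.sum_le_sum_of_subset_of_nonneg (s := ({k, l} : Finset (Fin n)))
    (t := Finset.univ) (f := fun m => A i m * A m j) (Finset.subset_univ _)
    (fun m _ _ => mul_nonneg (nonneg01 h01 h2 i m) (nonneg01 h01 h2 m j))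
  rw [Finset.sum_pair hkl] at h
  calc A i k * A k j + A i l * A l j ≤ ∑ m, A i m * A m j := h
    _ = (A * A) i j := (Matrix.mul_apply).symm
    _ = A i j := by rw [h2]

lemma diag_off {i j : Fin n} (hi : A i i = 1) (hj : A j j = 1) (hij : i ≠ j) :
    A i j = 0 := by
  rcases h01 i j with h | h
  · exact h
  · exfalso
    have := two_terms h01 h2 i j i j hij
    rw [hi, hj, h] at this
    omega

lemma exists_one {i j : Fin n} (hij : A i j = 1) : ∃ k, A i k = 1 ∧ A k j = 1 := by
  have hsum : ∑ k, A i k * A k j = 1 := by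
    rw [← Matrix.mul_apply, h2, hij]
  obtain ⟨k, -, hk⟩ := Finset.exists_ne_zero_of_sum_ne_zero (hsum ▸ one_ne_zero)
  rcases h01 i k with h | h
  · simp [h] at hk
  rcases h01 k j with h' | h'
  · simp [h'] at hk
  exact ⟨k, h, h'⟩

lemma factor {i j : Fin n} (hij : A i j = 1) :
    ∃ k, A k k = 1 ∧ A i k = 1 ∧ A k j = 1 := by
  obtain ⟨k, hik, hkj⟩ := exists_one h01 h2 hij
  refine ⟨k, ?_, hik, hkj⟩
  rcases h01 k k with hkk | hkk
  · exfalso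
    obtain ⟨l, hkl, hlj⟩ := exists_one h01 h2 hkj
    have hlk : l ≠ k := by rintro rfl; rw [hkk] at hkl; omega
    have hil : A i l = 1 := by
      have := term_le h01 h2 i l k
      rw [hik, hkl] at this
      rcases h01 i l with h | h <;> omega
    have := two_terms h01 h2 i j k l (Ne.symm hlk)
    rw [hik, hkj, hil, hlj, hij] at this
    omega
  · exact hkk

lemma col_zero {i j : Fin n} (hii : A i i = 0) (hij : A i j = 1) (k : Fin n) :
    A k i = 0 := by
  rcases h01 k i with h | hki
  · exact h
  exfalso
  obtain ⟨m1, hm1, him1, -⟩ := factor h01 h2 hij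
  obtain ⟨m2, hm2, -, hm2i⟩ := factor h01 h2 hki
  have h21 : A m2 m1 = 1 := by
    have := term_le h01 h2 m2 m1 i
    rw [hm2i, him1] at this
    rcases h01 m2 m1 with h | h <;> omega
  by_cases hmm : m2 = m1
  · subst hmm
    have := term_le h01 h2 i i m2
    rw [him1, hm2i, hii] at this
    omega
  · rw [diag_off h01 h2 hm2 hm1 hmm] at h21
    omega

end aux

lemma blockH_idem {r m s : ℕ} (X : Matrix (Fin r) (Fin m) ℤ) (Y : Matrix (Fin m) (Fin s) ℤ) :
    blockH X 1 Y (X * Y) * blockH X 1 Y (X * Y) = blockH X 1 Y (X * Y) := by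
  unfold blockH
  rw [Matrix.fromBlocks_multiply, Matrix.fromBlocks_multiply,
    Matrix.fromCols_mul_fromBlocks]
  simp [Matrix.mul_assoc]


theorem stmt8 {n : ℕ} (A : Matrix (Fin n) (Fin n) ℤ) (h01 : IsZeroOne A) :
    A ^ 2 = A ↔
      ∃ (r m s : ℕ) (X : Matrix (Fin r) (Fin m) ℤ) (Y : Matrix (Fin m) (Fin s) ℤ),
        IsZeroOne X ∧ IsZeroOne Y ∧ IsZeroOne (X * Y) ∧
        ∃ e : Fin n ≃ (Fin r ⊕ Fin m ⊕ Fin s),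
          ∀ i j, A i j = blockH X (1 : Matrix (Fin m) (Fin m) ℤ) Y (X * Y) (e i) (e j) := by
  constructor
  · intro hsq
    have h2 : A * A = A := by rwa [← pow_two]
    classical
    set pM : Fin n → Prop := fun i => A i i = 1 with hpM
    set pR : Fin n → Prop := fun i => A i i = 0 ∧ ∃ j, A i j = 1 with hpR
    set pS : Fin n → Prop := fun i => ¬ pR i ∧ ¬ pM i with hpS
    -- basic consequences
    have hRM : ∀ i, pR i → ¬ pM i := by
      rintro i ⟨h0, -⟩ h1; rw [hpM] at h1; omega
    have hScol : ∀ {i : Fin n}, pR i → ∀ k, A k i = 0 := by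
      rintro i ⟨h0, j, hj⟩ k; exact col_zero h01 h2 h0 hj k
    have hSrow : ∀ {i : Fin n}, pS i → ∀ j, A i j = 0 := by
      rintro i ⟨hr, hm⟩ j
      rcases h01 i j with h | h
      · exact h
      · exfalso
        rcases h01 i i with h0 | h0
        · exact hr ⟨h0, j, h⟩
        · exact hm h0
    -- the partition equivalence
    let T := {x : Fin n // pR x} ⊕ ({x : Fin n // pM x} ⊕ {x : Fin n // pS x})
    let f : Fin n → T := fun i =>
      if h : pR i then Sum.inl ⟨i, h⟩
      else if h' : pM i then Sum.inr (Sum.inl ⟨i, h'⟩)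
      else Sum.inr (Sum.inr ⟨i, h, h'⟩)
    let e0 : Fin n ≃ T :=
      { toFun := f
        invFun := Sum.elim Subtype.val (Sum.elim Subtype.val Subtype.val)
        left_inv := fun i => by simp only [f]; split_ifs <;> rfl
        right_inv := fun t => by
          rcases t with ⟨x, hx⟩ | ⟨x, hx⟩ | ⟨x, hx⟩
          · simp only [Sum.elim_inl, f, dif_pos hx]
          · simp only [Sum.elim_inr, Sum.elim_inl, f, dif_neg (fun h => hRM x h hx), dif_pos hx]
          · simp only [Sum.elim_inr, f, dif_neg hx.1, dif_neg hx.2] }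
    set r := Fintype.card {x : Fin n // pR x} with hr
    set m := Fintype.card {x : Fin n // pM x} with hm
    set s := Fintype.card {x : Fin n // pS x} with hs
    let eqR : {x : Fin n // pR x} ≃ Fin r := Fintype.equivFin _
    let eqM : {x : Fin n // pM x} ≃ Fin m := Fintype.equivFin _
    let eqS : {x : Fin n // pS x} ≃ Fin s := Fintype.equivFin _
    let e : Fin n ≃ (Fin r ⊕ Fin m ⊕ Fin s) := e0.trans (eqR.sumCongr (eqM.sumCongr eqS))
    let X : Matrix (Fin r) (Fin m) ℤ := fun a b => A (eqR.symm a).1 (eqM.symm b).1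
    let Y : Matrix (Fin m) (Fin s) ℤ := fun b c => A (eqM.symm b).1 (eqS.symm c).1
    -- key product formula
    have hXY : ∀ (a : Fin r) (c : Fin s), (X * Y) a c = A (eqR.symm a).1 (eqS.symm c).1 := by
      intro a c
      calc (X * Y) a c = ∑ b : Fin m, X a b * Y b c := Matrix.mul_apply
        _ = ∑ b : Fin m, A (eqR.symm a).1 (eqM.symm b).1 * A (eqM.symm b).1 (eqS.symm c).1 := rfl
        _ = ∑ k : {x : Fin n // pM x}, A (eqR.symm a).1 k.1 * A k.1 (eqS.symm c).1 :=
            Equiv.sum_comp eqM.symm (fun k : {x : Fin n // pM x} => A (eqR.symm a).1 k.1 * A k.1 (eqS.symm c).1)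
        _ = ∑ k ∈ Finset.univ.filter pM, A (eqR.symm a).1 k * A k (eqS.symm c).1 :=
            (Finset.sum_subtype (p := pM) (Finset.univ.filter pM) (fun x => by simp) (fun k => A (eqR.symm a).1 k * A k (eqS.symm c).1)).symm
        _ = ∑ k, A (eqR.symm a).1 k * A k (eqS.symm c).1 := by
            apply Finset.sum_filter_of_ne
            intro k _ hk
            rcases h01 k k with h0 | h0
            · by_contra hMk
              by_cases hRk : pR k
              · exact hk (by rw [hScol hRk _, zero_mul])
              · exact hk (by rw [hSrow ⟨hRk, hMk⟩ _, mul_zero])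
            · exact h0
        _ = (A * A) (eqR.symm a).1 (eqS.symm c).1 := (Matrix.mul_apply).symm
        _ = A (eqR.symm a).1 (eqS.symm c).1 := by rw [h2]
    -- computation of e on each part
    have heR : ∀ (i : Fin n) (h : pR i), e i = Sum.inl (eqR ⟨i, h⟩) := by
      intro i h
      simp only [e, Equiv.trans_apply, Equiv.coe_fn_mk, e0, f, dif_pos h]
      rfl
    have heM : ∀ (i : Fin n) (h : pM i), e i = Sum.inr (Sum.inl (eqM ⟨i, h⟩)) := by
      intro i h
      simp only [e, Equiv.trans_apply, Equiv.coe_fn_mk, e0, f,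
        dif_neg (fun h' => hRM i h' h), dif_pos h]
      rfl
    have heS : ∀ (i : Fin n) (h : pS i), e i = Sum.inr (Sum.inr (eqS ⟨i, h⟩)) := by
      intro i h
      simp only [e, Equiv.trans_apply, Equiv.coe_fn_mk, e0, f,
        dif_neg h.1, dif_neg h.2]
      rfl
    refine ⟨r, m, s, X, Y, fun a b => h01 _ _, fun b c => h01 _ _,
      fun a c => by rw [hXY]; exact h01 _ _, e, ?_⟩
    intro i j
    by_cases hRi : pR i
    · rw [heR i hRi]
      by_cases hRj : pR j
      · rw [heR j hRj]
        simp only [blockH, Matrix.fromBlocks_apply₁₁, Matrix.zero_apply]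
        exact hScol hRj i
      by_cases hMj : pM j
      · rw [heM j hMj]
        simp only [blockH, Matrix.fromBlocks_apply₁₂, Matrix.fromCols_apply_inl]
        simp only [X, Equiv.symm_apply_apply]
      · rw [heS j ⟨hRj, hMj⟩]
        simp only [blockH, Matrix.fromBlocks_apply₁₂, Matrix.fromCols_apply_inr]
        rw [hXY]
        simp only [Equiv.symm_apply_apply]
    by_cases hMi : pM i
    · rw [heM i hMi]
      by_cases hRj : pR j
      · rw [heR j hRj]
        simp only [blockH, Matrix.fromBlocks_apply₂₁, Matrix.zero_apply]
        exact hScol hRj i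
      by_cases hMj : pM j
      · rw [heM j hMj]
        simp only [blockH, Matrix.fromBlocks_apply₂₂, Matrix.fromBlocks_apply₁₁,
          Matrix.one_apply]
        by_cases hij : i = j
        · subst hij; rw [if_pos rfl]; exact hMi
        · have hne : eqM ⟨i, hMi⟩ ≠ eqM ⟨j, hMj⟩ := fun h =>
            hij (congrArg Subtype.val (eqM.injective h))
          rw [if_neg hne]
          exact diag_off h01 h2 hMi hMj hij
      · rw [heS j ⟨hRj, hMj⟩]
        simp only [blockH, Matrix.fromBlocks_apply₂₂, Matrix.fromBlocks_apply₁₂]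
        simp only [Y, Equiv.symm_apply_apply]
    · have hSi : pS i := ⟨hRi, hMi⟩
      rw [heS i hSi, hSrow hSi j]
      rcases e j with a | b | c <;> simp [blockH]
  · rintro ⟨r, m, s, X, Y, hX, hY, hXYzo, e, he⟩
    have hA : A = (blockH X 1 Y (X * Y)).submatrix e e := Matrix.ext fun i j => he i j
    rw [pow_two, hA, Matrix.submatrix_mul_equiv, blockH_idem]
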